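/- Let P be a subgroup of a finite group G, and let L_P be the set of subsets {g_1,…,g_l} ⊆ G that are complete sets of left coset representatives of P in G, with G acting on L_P by left multiplication. If x ∈ k satisfies tr_P(x) = Σ_{g∈P} g(x) = 1 in a commutative ring k with G-action, then Σ_{{g_1,…,g_l}∈L_P} ∏_{j=1}^l g_j(x) = 1. -/

import Mathlib

/-- `S` is a complete set of left coset representatives of `P` in `G`: it contains
exactly one element of each left coset of `P`. -/
def IsTransversal {G : Type*} [Group G] (P : Subgroup G) (S : Finset G) : Prop :=
  ∀ g : G, ∃! s : G, s ∈ S ∧ g⁻¹ * s ∈ P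

open scoped Classical in
/-- The trace map of the subgroup `H` acting on `k`. -/
noncomputable def tr {G : Type*} [Group G] [Fintype G] {k : Type*} [CommRing k]
    [MulSemiringAction G k] (H : Subgroup G) (x : k) : k :=
  ∑ σ : G, if σ ∈ H then σ • x else 0

open Finset

open scoped Classical in
/-- If `tr_P x = 1` then the sum, over all complete sets of left coset representatives
`S` of `P` in `G`, of the products `∏_{g ∈ S} g • x`, equals `1`. -/
theorem sum_over_transversals {G k : Type*} [Group G] [Fintype G] [CommRing k]
    [MulSemiringAction G k] (P : Subgroup G) (x : k) (hx : tr P x = 1) :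
    ∑ S ∈ Finset.univ.filter (fun S : Finset G => IsTransversal P S),
      ∏ g ∈ S, g • x = 1 := by
  classical
  have hout : ∀ c : G ⧸ P, ((Quotient.out c : G) : G ⧸ P) = c := fun c => c.out_eq
  -- fiber sum over each coset is 1
  have fiber : ∀ c : G ⧸ P,
      ∑ g ∈ univ.filter (fun g : G => (g : G ⧸ P) = c), g • x = 1 := by
    intro c
    have h1 : tr P x = ∑ σ ∈ univ.filter (fun σ : G => σ ∈ P), σ • x := by
      rw [tr, sum_filter]
    have h2 : ∑ g ∈ univ.filter (fun g : G => (g : G ⧸ P) = c), g • x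
        = ∑ σ ∈ univ.filter (fun σ : G => σ ∈ P), (c.out * σ) • x := by
      apply Finset.sum_nbij' (fun g => c.out⁻¹ * g) (fun σ => c.out * σ)
      · intro g hg
        simp only [mem_filter, mem_univ, true_and] at hg ⊢
        have : (c.out : G ⧸ P) = (g : G ⧸ P) := by rw [hg, hout c]
        exact QuotientGroup.eq.mp this
      · intro σ hσ
        simp only [mem_filter, mem_univ, true_and] at hσ ⊢
        exact (QuotientGroup.eq.mpr (by simpa using hσ)).symm.trans (hout c)
      · intro g _; group
      · intro σ _; group
      · intro g hg; rw [mul_inv_cancel_left]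
    rw [h2]
    have : ∑ σ ∈ univ.filter (fun σ : G => σ ∈ P), (c.out * σ) • x
        = c.out • ∑ σ ∈ univ.filter (fun σ : G => σ ∈ P), σ • x := by
      rw [Finset.smul_sum]; simp [mul_smul]
    rw [this, ← h1, hx, smul_one]
  have key : (1 : k) = ∏ c : G ⧸ P,
      ∑ g ∈ univ.filter (fun g : G => (g : G ⧸ P) = c), g • x := by
    simp [fiber]
  rw [key, Finset.prod_univ_sum]
  -- now reindex
  symm
  apply Finset.sum_bij (fun p _ => Finset.image (fun c : G ⧸ P => p c) univ)
  · -- maps into transversals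
    intro p hp
    simp only [Fintype.mem_piFinset, mem_filter, mem_univ, true_and] at hp
    simp only [mem_filter, mem_univ, true_and]
    intro g
    refine ⟨p (g : G ⧸ P), ⟨mem_image_of_mem _ (mem_univ _), ?_⟩, ?_⟩
    · exact QuotientGroup.eq.mp (hp (g : G ⧸ P)).symm
    · rintro s ⟨hs, hsP⟩
      obtain ⟨c, -, rfl⟩ := mem_image.mp hs
      have : (g : G ⧸ P) = c := by rw [← hp c]; exact QuotientGroup.eq.mpr hsP
      rw [this]
  · -- injective
    intro p hp q hq h
    simp only [Fintype.mem_piFinset, mem_filter, mem_univ, true_and] at hp hq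
    funext c
    have : p c ∈ Finset.image (fun c : G ⧸ P => q c) univ := by
      rw [← h]; exact mem_image_of_mem _ (mem_univ _)
    obtain ⟨c', -, hc'⟩ := mem_image.mp this
    have : c' = c := by rw [← hp c, ← hq c', hc']
    rw [← hc', this]
  · -- surjective
    intro S hS
    simp only [mem_filter, mem_univ, true_and] at hS
    refine ⟨fun c => ((hS c.out).exists).choose, ?_, ?_⟩
    · simp only [Fintype.mem_piFinset, mem_filter, mem_univ, true_and]
      intro c
      have h := ((hS c.out).exists).choose_spec
      exact (QuotientGroup.eq.mpr h.2).symm.trans (hout c)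
    · apply Finset.Subset.antisymm
      · intro s hs
        obtain ⟨c, -, rfl⟩ := mem_image.mp hs
        exact ((hS c.out).exists).choose_spec.1
      · intro s hs
        apply mem_image.mpr
        refine ⟨(s : G ⧸ P), mem_univ _, ?_⟩
        have h := (hS ((s : G ⧸ P).out)).unique
          ((((hS ((s : G ⧸ P).out)).exists).choose_spec))
          ⟨hs, QuotientGroup.eq.mp (hout (s : G ⧸ P))⟩
        exact h
  · -- values
    intro p hp
    simp only [Fintype.mem_piFinset, mem_filter, mem_univ, true_and] at hp
    rw [Finset.prod_image]
    intro c _ c' _ h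
    rw [← hp c, ← hp c', show p c = p c' from h]
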